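/- Let A be a tropically nonsingular (n+1)×(n+1) matrix over the tropical semiring and b ∈ (ℝ ∪ {-∞})^{n+1}. Suppose x ∈ (ℝ ∪ {-∞})^{n+1} is such that for every row i, the maximum in max_j(max(a_{ij} + x_j, b_i)) (i.e., in the expression ⊕_j (a_{ij}⊗x_j ⊕ b_i)) is attained at least twice. Then for each coordinate i, x_i ≤ |B_i| − |A|, where B_i is the Cramer matrix obtained from A by replacing column i with b. -/

import Mathlib

lemma formPerm_aux {α : Type*} [DecidableEq α] (q : ℕ → α) (m : ℕ)
    (hq : ∀ u < m, ∀ v < m, q u = q v → u = v) :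
    ∃ c : Equiv.Perm α,
      (∀ u, u + 1 < m → c (q u) = q (u + 1)) ∧
      (∀ u, u + 1 = m → c (q u) = q 0) ∧
      (∀ z, (∀ u < m, z ≠ q u) → c z = z) := by
  classical
  set L : List α := (List.range m).map q with hL
  have hlen : L.length = m := by simp [hL]
  have hget : ∀ (u : ℕ) (hu : u < m), L[u]'(by omega) = q u := by
    intro u hu; simp [hL]
  have hnd : L.Nodup := by
    refine List.Nodup.map_on ?_ List.nodup_range
    intro u hu v hv h
    exact hq u (List.mem_range.mp hu) v (List.mem_range.mp hv) h
  refine ⟨L.formPerm, ?_, ?_, ?_⟩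
  · intro u hu
    rw [← hget u (by omega), ← hget (u+1) hu, List.formPerm_apply_getElem L hnd u (by omega)]
    simp only [hlen, Nat.mod_eq_of_lt (show u + 1 < m by omega)]
  · intro u hu
    rw [← hget u (by omega), ← hget 0 (by omega), List.formPerm_apply_getElem L hnd u (by omega)]
    simp only [hlen, hu, Nat.mod_self]
  · intro z hz
    refine List.formPerm_apply_of_notMem ?_
    simp only [hL, List.mem_map, List.mem_range, not_exists]
    rintro u ⟨hu, h⟩
    exact hz u hu h.symm

lemma sum_split_aux {N : ℕ} (h : Fin N → WithBot ℝ) (r : ℕ → Fin N) (m : ℕ)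
    (hr : ∀ u < m, ∀ v < m, r u = r v → u = v) :
    ∑ k, h k = ∑ u ∈ Finset.range m, h (r u) + ∑ k ∈ ((Finset.range m).image r)ᶜ, h k := by
  classical
  rw [← Finset.sum_add_sum_compl ((Finset.range m).image r) h,
    Finset.sum_image (fun u hu v hv => hr u (Finset.mem_range.mp hu) v (Finset.mem_range.mp hv))]

/-- Tropical (max-plus) determinant of a square matrix with entries in ℝ ∪ {-∞}. -/
noncomputable def tropDet {m : ℕ} (A : Matrix (Fin m) (Fin m) (WithBot ℝ)) : WithBot ℝ :=
  Finset.univ.sup fun π : Equiv.Perm (Fin m) => ∑ i, A i (π i)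

/-- A is tropically nonsingular if the maximum in its tropical determinant is
attained by exactly one permutation. -/
def TropNonsingular {m : ℕ} (A : Matrix (Fin m) (Fin m) (WithBot ℝ)) : Prop :=
  ∃! π : Equiv.Perm (Fin m), (∑ i, A i (π i)) = tropDet A

/-- Cramer system's upper bound: if A is tropically nonsingular and, for every row i,
the maximum among the terms a_{ij} + x_j (j = 0,…,n) and b_i is attained at least
twice, then x_i ⊗ |A| ≤ |B_i| (i.e. x_i ≤ |B_i| − |A|), where B_i is the matrix
obtained from A by replacing column i with b. -/
theorem cramer_upper_bound (n : ℕ)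
    (A : Matrix (Fin (n + 1)) (Fin (n + 1)) (WithBot ℝ))
    (b x : Fin (n + 1) → WithBot ℝ)
    (hA : TropNonsingular A)
    (hx : ∀ i : Fin (n + 1), ∃ u v : Option (Fin (n + 1)), u ≠ v ∧
      u.elim (b i) (fun j => A i j + x j) =
        (Finset.univ.sup fun o : Option (Fin (n + 1)) =>
          o.elim (b i) fun j => A i j + x j) ∧
      v.elim (b i) (fun j => A i j + x j) =
        (Finset.univ.sup fun o : Option (Fin (n + 1)) =>
          o.elim (b i) fun j => A i j + x j)) :
    ∀ i : Fin (n + 1), x i + tropDet A ≤ tropDet (A.updateCol i b) := by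
  classical
  obtain ⟨σ, hσ, hσu⟩ := hA
  intro i
  -- choose, for each column jc, an attaining option of row σ⁻¹ jc different from `some jc`
  have hfex : ∀ jc : Fin (n+1), ∃ op : Option (Fin (n+1)), op ≠ some jc ∧
      op.elim (b (σ.symm jc)) (fun j' => A (σ.symm jc) j' + x j') =
      (Finset.univ.sup fun o : Option (Fin (n + 1)) =>
        o.elim (b (σ.symm jc)) fun j' => A (σ.symm jc) j' + x j') := by
    intro jc
    obtain ⟨u, v, huv, hu, hv⟩ := hx (σ.symm jc)
    rcases eq_or_ne u (some jc) with h | h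
    · exact ⟨v, fun hv' => huv (h.trans hv'.symm), hv⟩
    · exact ⟨u, h, hu⟩
  choose f hf1 hf2 using hfex
  have hterm_le : ∀ (k jc : Fin (n+1)), A k jc + x jc ≤
      (Finset.univ.sup fun o : Option (Fin (n + 1)) => o.elim (b k) fun j' => A k j' + x j') := by
    intro k jc
    have := Finset.le_sup (f := fun o : Option (Fin (n+1)) => o.elim (b k) fun j' => A k j' + x j')
      (Finset.mem_univ (some jc))
    simpa using this
  -- the chain of columns
  set o : ℕ → Option (Fin (n+1)) := fun t => (fun z : Option (Fin (n+1)) => z.bind f)^[t] (some i) with ho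
  have o0 : o 0 = some i := by simp [ho]
  have osucc : ∀ t, o (t+1) = (o t).bind f := by
    intro t; rw [ho]; simp [Function.iterate_succ_apply']
  set j : ℕ → Fin (n+1) := fun t => (o t).getD i with hjdef
  have j0 : j 0 = i := by simp [hjdef, o0]
  have hj : ∀ t, o t ≠ none → o t = some (j t) := by
    intro t h
    cases ht : o t with
    | none => exact absurd ht h
    | some a => simp [hjdef, ht]
  have odet : ∀ u v, o u = o v → ∀ k, o (u+k) = o (v+k) := by
    intro u v h k
    induction k with
    | zero => simpa using h
    | succ k ih =>
      rw [show u + (k+1) = (u+k)+1 from rfl, show v + (k+1) = (v+k)+1 from rfl,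
        osucc, osucc, ih]
  have step : ∀ u, o u = some (j u) → o (u+1) = some (j (u+1)) →
      A (σ.symm (j u)) (j u) + x (j u) ≤ A (σ.symm (j u)) (j (u+1)) + x (j (u+1)) := by
    intro u h1 h2
    have hfo : f (j u) = some (j (u+1)) := by
      have h5 := osucc u
      rw [h1, h2, Option.bind_some] at h5
      exact h5.symm
    have h3 := hf2 (j u)
    rw [hfo, Option.elim_some] at h3
    rw [h3]
    exact hterm_le _ _
  have tele : ∀ a c, (∀ u, a ≤ u → u ≤ a + c → o u = some (j u)) →
      x (j a) + ∑ u ∈ Finset.range c, A (σ.symm (j (a+u))) (j (a+u)) ≤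
      x (j (a+c)) + ∑ u ∈ Finset.range c, A (σ.symm (j (a+u))) (j (a+u+1)) := by
    intro a c
    induction c with
    | zero => intro _; simp
    | succ c ih =>
      intro h
      have h1 := ih (fun u hu hu' => h u hu (by omega))
      rw [Finset.sum_range_succ, Finset.sum_range_succ]
      have h2 : A (σ.symm (j (a+c))) (j (a+c)) + x (j (a+c)) ≤
          A (σ.symm (j (a+c))) (j (a+c+1)) + x (j (a+c+1)) :=
        step (a+c) (h (a+c) (by omega) (by omega)) (h (a+c+1) (by omega) (by omega))
      rw [show a + (c+1) = a + c + 1 by omega]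
      calc x (j a) + (∑ u ∈ Finset.range c, A (σ.symm (j (a+u))) (j (a+u)) + A (σ.symm (j (a+c))) (j (a+c)))
          = (x (j a) + ∑ u ∈ Finset.range c, A (σ.symm (j (a+u))) (j (a+u))) + A (σ.symm (j (a+c))) (j (a+c)) := by
            rw [add_assoc]
        _ ≤ (x (j (a+c)) + ∑ u ∈ Finset.range c, A (σ.symm (j (a+u))) (j (a+u+1))) + A (σ.symm (j (a+c))) (j (a+c)) :=
            add_le_add_left h1 _
        _ = ∑ u ∈ Finset.range c, A (σ.symm (j (a+u))) (j (a+u+1)) + (A (σ.symm (j (a+c))) (j (a+c)) + x (j (a+c))) := by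
            abel
        _ ≤ ∑ u ∈ Finset.range c, A (σ.symm (j (a+u))) (j (a+u+1)) + (A (σ.symm (j (a+c))) (j (a+c+1)) + x (j (a+c+1))) :=
            add_le_add le_rfl h2
        _ = x (j (a+c+1)) + (∑ u ∈ Finset.range c, A (σ.symm (j (a+u))) (j (a+u+1)) + A (σ.symm (j (a+c))) (j (a+c+1))) := by
            abel
  by_cases hterm : ∃ T, o T = none
  · -- Case A : the chain reaches b; build a permutation for the Cramer matrix
    have hTnone : o (Nat.find hterm) = none := Nat.find_spec hterm
    have hTmin : ∀ m, m < Nat.find hterm → o m ≠ none := fun m hm => Nat.find_min hterm hm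
    have hT1 : Nat.find hterm ≠ 0 := by
      intro h; rw [h, o0] at hTnone; exact absurd hTnone (Option.some_ne_none i)
    obtain ⟨T', hT'⟩ : ∃ T', Nat.find hterm = T' + 1 := ⟨Nat.find hterm - 1, by omega⟩
    have hsomes : ∀ u, u < T' + 1 → o u = some (j u) := fun u hu => hj u (hTmin u (by omega))
    have hinj : ∀ u, u < T' + 1 → ∀ v, v < T' + 1 → j u = j v → u = v := by
      have key : ∀ u v, u < v → v < T' + 1 → j u = j v → False := by
        intro u v huv hv hjuv
        have h1 : o u = o v := by rw [hsomes u (by omega), hsomes v hv, hjuv]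
        have h2 := odet u v h1 ((T' + 1) - v)
        have h3 : o (v + ((T' + 1) - v)) = none := by
          rw [show v + ((T' + 1) - v) = T' + 1 by omega, ← hT']; exact hTnone
        rw [h3] at h2
        exact hTmin (u + ((T' + 1) - v)) (by omega) h2
      intro u hu v hv hjuv
      rcases lt_trichotomy u v with h | h | h
      · exact absurd hjuv (fun e => key u v h hv e)
      · exact h
      · exact absurd hjuv.symm (fun e => key v u h hu e)
    obtain ⟨cper, hc1, hc2, hc3⟩ := formPerm_aux j (T' + 1) hinj
    set π : Equiv.Perm (Fin (n+1)) := σ.trans cper with hπ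
    have hend : A (σ.symm (j T')) (j T') + x (j T') ≤ b (σ.symm (j T')) := by
      have h4 : o (T'+1) = none := by rw [← hT']; exact hTnone
      have h5 := osucc T'
      rw [h4, hsomes T' (by omega), Option.bind_some] at h5
      have hfo : f (j T') = none := h5.symm
      have h3 := hf2 (j T')
      rw [hfo, Option.elim_none] at h3
      rw [h3]
      exact hterm_le _ _
    have htel := tele 0 T' (fun u hu hu' => hsomes u (by omega))
    simp only [Nat.zero_add, j0] at htel
    have hmain : x i + ∑ u ∈ Finset.range (T'+1), A (σ.symm (j u)) (j u) ≤
        b (σ.symm (j T')) + ∑ u ∈ Finset.range T', A (σ.symm (j u)) (j (u+1)) := by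
      rw [Finset.sum_range_succ, ← add_assoc]
      calc x i + ∑ u ∈ Finset.range T', A (σ.symm (j u)) (j u) + A (σ.symm (j T')) (j T')
          ≤ (x (j T') + ∑ u ∈ Finset.range T', A (σ.symm (j u)) (j (u+1))) + A (σ.symm (j T')) (j T') :=
            add_le_add_left htel _
        _ = ∑ u ∈ Finset.range T', A (σ.symm (j u)) (j (u+1)) + (A (σ.symm (j T')) (j T') + x (j T')) := by abel
        _ ≤ ∑ u ∈ Finset.range T', A (σ.symm (j u)) (j (u+1)) + b (σ.symm (j T')) := add_le_add le_rfl hend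
        _ = b (σ.symm (j T')) + ∑ u ∈ Finset.range T', A (σ.symm (j u)) (j (u+1)) := add_comm _ _
    have hrinj : ∀ u, u < T' + 1 → ∀ v, v < T' + 1 → σ.symm (j u) = σ.symm (j v) → u = v :=
      fun u hu v hv e => hinj u hu v hv (σ.symm.injective e)
    have hsA : ∑ k, A k (σ k) = ∑ u ∈ Finset.range (T'+1), A (σ.symm (j u)) (σ (σ.symm (j u))) +
        ∑ k ∈ ((Finset.range (T'+1)).image (fun u => σ.symm (j u)))ᶜ, A k (σ k) :=
      sum_split_aux (fun k => A k (σ k)) (fun u => σ.symm (j u)) (T'+1) hrinj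
    have hsB : ∑ k, (A.updateCol i b) k (π k) =
        ∑ u ∈ Finset.range (T'+1), (A.updateCol i b) (σ.symm (j u)) (π (σ.symm (j u))) +
        ∑ k ∈ ((Finset.range (T'+1)).image (fun u => σ.symm (j u)))ᶜ, (A.updateCol i b) k (π k) :=
      sum_split_aux (fun k => (A.updateCol i b) k (π k)) (fun u => σ.symm (j u)) (T'+1) hrinj
    have hBsum : ∑ u ∈ Finset.range (T'+1), (A.updateCol i b) (σ.symm (j u)) (π (σ.symm (j u))) =
        b (σ.symm (j T')) + ∑ u ∈ Finset.range T', A (σ.symm (j u)) (j (u+1)) := by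
      rw [Finset.sum_range_succ]
      have hlast : (A.updateCol i b) (σ.symm (j T')) (π (σ.symm (j T'))) = b (σ.symm (j T')) := by
        have hπl : π (σ.symm (j T')) = i := by
          simp only [hπ, Equiv.trans_apply, Equiv.apply_symm_apply]
          rw [hc2 T' rfl, j0]
        rw [hπl, Matrix.updateCol_apply, if_pos rfl]
      have hrest : ∀ u ∈ Finset.range T', (A.updateCol i b) (σ.symm (j u)) (π (σ.symm (j u))) =
          A (σ.symm (j u)) (j (u+1)) := by
        intro u hu
        have hu' := Finset.mem_range.mp hu
        have hπu : π (σ.symm (j u)) = j (u+1) := by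
          simp only [hπ, Equiv.trans_apply, Equiv.apply_symm_apply]
          exact hc1 u (by omega)
        rw [hπu, Matrix.updateCol_apply, if_neg]
        intro e
        rw [← j0] at e
        have := hinj (u+1) (by omega) 0 (by omega) e
        omega
      rw [Finset.sum_congr rfl hrest, hlast]
      exact add_comm _ _
    have hcompl : ∀ k ∈ ((Finset.range (T'+1)).image (fun u => σ.symm (j u)))ᶜ,
        A k (σ k) = (A.updateCol i b) k (π k) := by
      intro k hk
      rw [Finset.mem_compl] at hk
      have hkn : ∀ u, u < T'+1 → σ k ≠ j u := by
        intro u hu e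
        exact hk (Finset.mem_image.mpr ⟨u, Finset.mem_range.mpr hu, by rw [← e, Equiv.symm_apply_apply]⟩)
      have hπk : π k = σ k := by
        simp only [hπ, Equiv.trans_apply]
        exact hc3 (σ k) (fun u hu => hkn u hu)
      rw [hπk, Matrix.updateCol_apply, if_neg (by rw [← j0]; exact hkn 0 (by omega))]
    calc x i + tropDet A = x i + ∑ k, A k (σ k) := by rw [hσ]
      _ = (x i + ∑ u ∈ Finset.range (T'+1), A (σ.symm (j u)) (j u)) +
          ∑ k ∈ ((Finset.range (T'+1)).image (fun u => σ.symm (j u)))ᶜ, A k (σ k) := by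
            rw [hsA, ← add_assoc]
            simp only [Equiv.apply_symm_apply]
      _ ≤ (b (σ.symm (j T')) + ∑ u ∈ Finset.range T', A (σ.symm (j u)) (j (u+1))) +
          ∑ k ∈ ((Finset.range (T'+1)).image (fun u => σ.symm (j u)))ᶜ, A k (σ k) :=
            add_le_add_left hmain _
      _ = ∑ u ∈ Finset.range (T'+1), (A.updateCol i b) (σ.symm (j u)) (π (σ.symm (j u))) +
          ∑ k ∈ ((Finset.range (T'+1)).image (fun u => σ.symm (j u)))ᶜ, (A.updateCol i b) k (π k) := by
            rw [hBsum, Finset.sum_congr rfl hcompl]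
      _ = ∑ k, (A.updateCol i b) k (π k) := hsB.symm
      _ ≤ tropDet (A.updateCol i b) :=
            Finset.le_sup (f := fun p : Equiv.Perm (Fin (n+1)) => ∑ k, (A.updateCol i b) k (p k))
              (Finset.mem_univ π)
  · -- Case B : the chain never reaches b; find a cycle and contradict nonsingularity
    push_neg at hterm
    have hall : ∀ u, o u = some (j u) := fun u => hj u (hterm u)
    obtain ⟨a, ha, c, hc, hac, hace⟩ := Finset.exists_ne_map_eq_of_card_lt_of_maps_to
      (s := Finset.range (n+2)) (t := (Finset.univ : Finset (Fin (n+1))))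
      (by simp) (fun a _ => Finset.mem_univ (j a))
    have hrep : ∃ t, ∃ s, s < t ∧ j s = j t := by
      rcases lt_or_gt_of_ne hac with h | h
      · exact ⟨c, a, h, hace⟩
      · exact ⟨a, c, h, hace.symm⟩
    obtain ⟨s, hst, hjst⟩ := Nat.find_spec hrep
    have hinj : ∀ u, u < Nat.find hrep → ∀ v, v < Nat.find hrep → j u = j v → u = v := by
      intro u hu v hv e
      by_contra hne
      rcases lt_or_gt_of_ne hne with h | h
      · exact Nat.find_min hrep hv ⟨u, h, e⟩
      · exact Nat.find_min hrep hu ⟨v, h, e.symm⟩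
    have ht2 : s + 2 ≤ Nat.find hrep := by
      rcases Nat.lt_or_ge (s+1) (Nat.find hrep) with h | h
      · omega
      · exfalso
        have htt : Nat.find hrep = s + 1 := by omega
        have h5 := osucc s
        rw [hall (s+1), hall s, Option.bind_some] at h5
        exact hf1 (j s) (by rw [← h5, ← htt, ← hjst])
    by_cases hbot : ∃ w, w ≤ Nat.find hrep ∧ x (j w) = ⊥
    · -- a -∞ on the chain : trivial bound
      obtain ⟨w, hwt, hw⟩ := hbot
      have htel := tele 0 w (fun u _ _ => hall u)
      simp only [Nat.zero_add, j0] at htel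
      rw [hw, WithBot.bot_add] at htel
      have hrinj : ∀ u, u < w → ∀ v, v < w → σ.symm (j u) = σ.symm (j v) → u = v :=
        fun u hu v hv e => hinj u (by omega) v (by omega) (σ.symm.injective e)
      have hsA : ∑ k, A k (σ k) = ∑ u ∈ Finset.range w, A (σ.symm (j u)) (σ (σ.symm (j u))) +
          ∑ k ∈ ((Finset.range w).image (fun u => σ.symm (j u)))ᶜ, A k (σ k) :=
        sum_split_aux (fun k => A k (σ k)) (fun u => σ.symm (j u)) w hrinj
      calc x i + tropDet A = x i + ∑ k, A k (σ k) := by rw [hσ]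
        _ = (x i + ∑ u ∈ Finset.range w, A (σ.symm (j u)) (j u)) +
            ∑ k ∈ ((Finset.range w).image (fun u => σ.symm (j u)))ᶜ, A k (σ k) := by
              rw [hsA, ← add_assoc]
              simp only [Equiv.apply_symm_apply]
        _ ≤ ⊥ + ∑ k ∈ ((Finset.range w).image (fun u => σ.symm (j u)))ᶜ, A k (σ k) :=
              add_le_add_left htel _
        _ = ⊥ := WithBot.bot_add _
        _ ≤ tropDet (A.updateCol i b) := bot_le
    · -- genuine cycle : contradiction with tropical nonsingularity
      exfalso
      push_neg at hbot
      obtain ⟨d, hd⟩ : ∃ d, Nat.find hrep = s + d := ⟨Nat.find hrep - s, by omega⟩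
      have hd2 : 2 ≤ d := by omega
      have htel := tele s d (fun u _ _ => hall u)
      rw [← hd, ← hjst] at htel
      have hxs : x (j s) ≠ ⊥ := hbot s (by omega)
      have hcyc : ∑ u ∈ Finset.range d, A (σ.symm (j (s+u))) (j (s+u)) ≤
          ∑ u ∈ Finset.range d, A (σ.symm (j (s+u))) (j (s+u+1)) := by
        rw [add_comm (x (j s)), add_comm (x (j s))] at htel
        exact (WithBot.add_le_add_iff_right hxs).mp htel
      obtain ⟨cper, hc1, hc2, hc3⟩ := formPerm_aux (fun u => j (s+u)) d
        (fun u hu v hv e => by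
          have := hinj (s+u) (by omega) (s+v) (by omega) e
          omega)
      set τ : Equiv.Perm (Fin (n+1)) := σ.trans cper with hτ
      have hcp : ∀ u, u < d → cper (j (s+u)) = j (s+u+1) := by
        intro u hu
        rcases Nat.lt_or_ge (u+1) d with h | h
        · exact hc1 u h
        · have hu1 : u + 1 = d := by omega
          rw [hc2 u hu1, show s + u + 1 = Nat.find hrep by omega, ← hjst]
          simp
      have hrinj : ∀ u, u < d → ∀ v, v < d → σ.symm (j (s+u)) = σ.symm (j (s+v)) → u = v :=
        fun u hu v hv e => by
          have := hinj (s+u) (by omega) (s+v) (by omega) (σ.symm.injective e)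
          omega
      have hsσ : ∑ k, A k (σ k) = ∑ u ∈ Finset.range d, A (σ.symm (j (s+u))) (σ (σ.symm (j (s+u)))) +
          ∑ k ∈ ((Finset.range d).image (fun u => σ.symm (j (s+u))))ᶜ, A k (σ k) :=
        sum_split_aux (fun k => A k (σ k)) (fun u => σ.symm (j (s+u))) d hrinj
      have hsτ : ∑ k, A k (τ k) = ∑ u ∈ Finset.range d, A (σ.symm (j (s+u))) (τ (σ.symm (j (s+u)))) +
          ∑ k ∈ ((Finset.range d).image (fun u => σ.symm (j (s+u))))ᶜ, A k (τ k) :=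
        sum_split_aux (fun k => A k (τ k)) (fun u => σ.symm (j (s+u))) d hrinj
      have hτrow : ∀ u ∈ Finset.range d,
          A (σ.symm (j (s+u))) (τ (σ.symm (j (s+u)))) = A (σ.symm (j (s+u))) (j (s+u+1)) := by
        intro u hu
        have := hcp u (Finset.mem_range.mp hu)
        simp only [hτ, Equiv.trans_apply, Equiv.apply_symm_apply]
        rw [this]
      have hτfix : ∀ k ∈ ((Finset.range d).image (fun u => σ.symm (j (s+u))))ᶜ,
          A k (τ k) = A k (σ k) := by
        intro k hk
        rw [Finset.mem_compl] at hk
        have hkn : ∀ u, u < d → σ k ≠ j (s+u) := by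
          intro u hu e
          exact hk (Finset.mem_image.mpr ⟨u, Finset.mem_range.mpr hu, by rw [← e, Equiv.symm_apply_apply]⟩)
        have hτk : τ k = σ k := by
          simp only [hτ, Equiv.trans_apply]
          exact hc3 (σ k) (fun u hu => hkn u hu)
        rw [hτk]
      have hge : tropDet A ≤ ∑ k, A k (τ k) := by
        rw [← hσ, hsσ, hsτ, Finset.sum_congr rfl hτrow, Finset.sum_congr rfl hτfix]
        refine add_le_add ?_ le_rfl
        simp only [Equiv.apply_symm_apply]
        exact hcyc
      have hle : (∑ k, A k (τ k)) ≤ tropDet A :=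
        Finset.le_sup (f := fun p : Equiv.Perm (Fin (n+1)) => ∑ k, A k (p k)) (Finset.mem_univ τ)
      have hτσ : τ = σ := hσu τ (le_antisymm hle hge)
      have h1 : τ (σ.symm (j s)) = j (s+1) := by
        simp only [hτ, Equiv.trans_apply, Equiv.apply_symm_apply]
        have := hcp 0 (by omega)
        simpa using this
      have h2 : j (s+1) = j s := by
        rw [← h1, hτσ, Equiv.apply_symm_apply]
      have := hinj (s+1) (by omega) s (by omega) h2
      omega
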